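/- Let α > 0 with α ≠ 1. The function I_α(s) := ∫_s^1 u^{−α} (1 − u^{2α})^{−1/2} du is continuous and strictly decreasing on (0, 1); if 0 < α < 1 it maps (0, 1) bijectively onto (0, C_α/(1−α)) where C_α := √π · Γ((1+α)/(2α)) / Γ(1/(2α)), and if α > 1 it maps (0, 1) bijectively onto (0, ∞). -/

import Mathlib

open Real MeasureTheory intervalIntegral Set Filter Topology

namespace IAlphaAux

/-- Key inequality: `min β 1 * (1-u) ≤ 1 - u^β` for `u ∈ [0,1]`, `β > 0`. -/
lemma one_sub_rpow_ge {β u : ℝ} (hβ : 0 < β) (hu0 : 0 ≤ u) (hu1 : u ≤ 1) :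
    min β 1 * (1 - u) ≤ 1 - u ^ β := by
  rcases le_or_gt 1 β with hb | hb
  · rw [min_eq_right hb]
    have h : u ^ β ≤ u := by
      rcases eq_or_lt_of_le hu0 with h | h
      · rw [← h, Real.zero_rpow hβ.ne']
      · calc u ^ β ≤ u ^ (1 : ℝ) := Real.rpow_le_rpow_of_exponent_ge h hu1 hb
          _ = u := Real.rpow_one u
    linarith
  · rw [min_eq_left hb.le]
    have h1 : (0 : ℝ) ≤ u ^ β := Real.rpow_nonneg hu0 β
    have h2 : u ^ β ≤ 1 := Real.rpow_le_one hu0 hu1 hβ.le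
    have hs : (-1 : ℝ) ≤ u ^ β - 1 := by linarith
    have hp : (1 : ℝ) ≤ 1 / β := by rw [le_div_iff₀ hβ]; linarith
    have key := one_add_mul_self_le_rpow_one_add hs hp
    have heq : (1 + (u ^ β - 1)) ^ (1 / β) = u := by
      have h3 : (1 : ℝ) + (u ^ β - 1) = u ^ β := by ring
      rw [h3, ← Real.rpow_mul hu0, mul_one_div, div_self hβ.ne', Real.rpow_one]
    rw [heq] at key
    have hb1 : β * (1 / β) = 1 := by field_simp
    nlinarith [mul_le_mul_of_nonneg_left key hβ.le]

noncomputable def f (α : ℝ) (u : ℝ) : ℝ := u ^ (-α) * (1 - u ^ (2 * α)) ^ (-(1 : ℝ) / 2)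

variable {α : ℝ}

lemma f_nonneg (hα : 0 < α) {u : ℝ} (h0 : 0 ≤ u) (h1 : u ≤ 1) : 0 ≤ f α u := by
  have : u ^ (2 * α) ≤ 1 := Real.rpow_le_one h0 h1 (by positivity)
  exact mul_nonneg (Real.rpow_nonneg h0 _) (Real.rpow_nonneg (by linarith) _)

lemma f_pos (hα : 0 < α) {u : ℝ} (hu : u ∈ Ioo (0 : ℝ) 1) : 0 < f α u := by
  have : u ^ (2 * α) < 1 := Real.rpow_lt_one hu.1.le hu.2 (by positivity)
  exact mul_pos (Real.rpow_pos_of_pos hu.1 _) (Real.rpow_pos_of_pos (by linarith) _)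

lemma f_contOn (hα : 0 < α) : ContinuousOn (f α) (Ioo 0 1) := by
  intro u hu
  have h1 : (0 : ℝ) < 1 - u ^ (2 * α) := by
    have : u ^ (2 * α) < 1 := Real.rpow_lt_one hu.1.le hu.2 (by positivity)
    linarith
  have c1 : ContinuousAt (fun u : ℝ => u ^ (-α)) u :=
    Real.continuousAt_rpow_const u (-α) (Or.inl hu.1.ne')
  have cb : ContinuousAt (fun u : ℝ => 1 - u ^ (2 * α)) u :=
    continuousAt_const.sub (Real.continuousAt_rpow_const u _ (Or.inl hu.1.ne'))
  have c2 : ContinuousAt (fun u : ℝ => (1 - u ^ (2 * α)) ^ (-(1 : ℝ) / 2)) u :=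
    ContinuousAt.comp (x := u) (g := fun y : ℝ => y ^ (-(1 : ℝ) / 2))
      (Real.continuousAt_rpow_const _ _ (Or.inl h1.ne')) cb
  exact (c1.mul c2).continuousWithinAt

lemma f_meas : Measurable (f α) := by
  unfold f; fun_prop

lemma f_intble_one (hα : 0 < α) {s : ℝ} (hs0 : 0 < s) (hs1 : s ≤ 1) :
    IntervalIntegrable (f α) volume s 1 := by
  set m : ℝ := min (2 * α) 1 with hm
  have hmpos : 0 < m := lt_min (by positivity) one_pos
  set C : ℝ := s ^ (-α) * m ^ (-(1 : ℝ) / 2) with hC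
  have hCpos : 0 < C := mul_pos (Real.rpow_pos_of_pos hs0 _) (Real.rpow_pos_of_pos hmpos _)
  have hg : IntervalIntegrable (fun u : ℝ => C * (1 - u) ^ (-(1 : ℝ) / 2)) volume s 1 := by
    have h0 : IntervalIntegrable (fun x : ℝ => x ^ (-(1 : ℝ) / 2)) volume 0 (1 - s) :=
      intervalIntegrable_rpow' (by norm_num)
    have h1 := ((h0.comp_sub_left 1).const_mul C).symm
    have h2 : (1 : ℝ) - (1 - s) = s := by ring
    rw [h2, sub_zero] at h1
    exact h1
  refine hg.mono_fun (f_meas.aestronglyMeasurable.restrict) ?_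
  rw [EventuallyLE, ae_restrict_iff' measurableSet_uIoc]
  filter_upwards with x hx
  rw [uIoc_of_le hs1] at hx
  have hx0 : 0 < x := hs0.trans hx.1
  have hfx : 0 ≤ f α x := f_nonneg hα hx0.le hx.2
  have hgx : 0 ≤ C * (1 - x) ^ (-(1 : ℝ) / 2) :=
    mul_nonneg hCpos.le (Real.rpow_nonneg (by linarith [hx.2]) _)
  rw [Real.norm_eq_abs, Real.norm_eq_abs, abs_of_nonneg hfx, abs_of_nonneg hgx]
  rcases eq_or_lt_of_le hx.2 with h1 | h1
  · have hf1 : f α x = 0 := by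
      simp only [f, h1, Real.one_rpow, sub_self]
      rw [Real.zero_rpow (by norm_num)]; ring
    rw [hf1]; exact hgx
  -- x < 1
  have hb1 : x ^ (-α) ≤ s ^ (-α) :=
    Real.rpow_le_rpow_of_nonpos hs0 hx.1.le (by linarith)
  have hkey : m * (1 - x) ≤ 1 - x ^ (2 * α) :=
    one_sub_rpow_ge (by positivity) hx0.le hx.2
  have hmx : 0 < m * (1 - x) := mul_pos hmpos (by linarith)
  have hb2 : (1 - x ^ (2 * α)) ^ (-(1 : ℝ) / 2) ≤ (m * (1 - x)) ^ (-(1 : ℝ) / 2) :=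
    Real.rpow_le_rpow_of_nonpos hmx hkey (by norm_num)
  have hb3 : (m * (1 - x)) ^ (-(1 : ℝ) / 2) = m ^ (-(1 : ℝ) / 2) * (1 - x) ^ (-(1 : ℝ) / 2) :=
    Real.mul_rpow hmpos.le (by linarith)
  calc f α x ≤ s ^ (-α) * ((m * (1 - x)) ^ (-(1 : ℝ) / 2)) := by
        exact mul_le_mul hb1 hb2 (Real.rpow_nonneg (by
          have : x ^ (2 * α) ≤ 1 := Real.rpow_le_one hx0.le hx.2 (by positivity)
          linarith) _) (Real.rpow_nonneg hs0.le _)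
    _ = C * (1 - x) ^ (-(1 : ℝ) / 2) := by rw [hb3, hC]; ring

lemma f_intble (hα : 0 < α) {s t : ℝ} (hs : 0 < s) (ht : 0 < t) (hs1 : s ≤ 1) (ht1 : t ≤ 1) :
    IntervalIntegrable (f α) volume s t :=
  (f_intble_one hα hs hs1).trans (f_intble_one hα ht ht1).symm

lemma f_intble_zero (hα : 0 < α) (hα1 : α < 1) : IntervalIntegrable (f α) volume 0 1 := by
  have half : IntervalIntegrable (f α) volume (1 / 2) 1 :=
    f_intble_one hα (by norm_num) (by norm_num)
  refine IntervalIntegrable.trans ?_ half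
  set D : ℝ := (1 - (1 / 2 : ℝ) ^ (2 * α)) ^ (-(1 : ℝ) / 2) with hD
  have hhalf : ((1 / 2 : ℝ)) ^ (2 * α) < 1 := Real.rpow_lt_one (by norm_num) (by norm_num) (by positivity)
  have hDpos : 0 < D := Real.rpow_pos_of_pos (by linarith) _
  have hg : IntervalIntegrable (fun u : ℝ => u ^ (-α) * D) volume 0 (1 / 2) :=
    (intervalIntegrable_rpow' (by linarith)).mul_const D
  refine hg.mono_fun (f_meas.aestronglyMeasurable.restrict) ?_
  rw [EventuallyLE, ae_restrict_iff' measurableSet_uIoc]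
  filter_upwards with x hx
  rw [uIoc_of_le (by norm_num : (0:ℝ) ≤ 1 / 2)] at hx
  have hx0 : 0 < x := hx.1
  have hx1 : x ≤ 1 := hx.2.trans (by norm_num)
  have hfx : 0 ≤ f α x := f_nonneg hα hx0.le hx1
  have hgx : 0 ≤ x ^ (-α) * D := mul_nonneg (Real.rpow_nonneg hx0.le _) hDpos.le
  rw [Real.norm_eq_abs, Real.norm_eq_abs, abs_of_nonneg hfx, abs_of_nonneg hgx]
  have h1 : x ^ (2 * α) ≤ (1 / 2 : ℝ) ^ (2 * α) :=
    Real.rpow_le_rpow hx0.le hx.2 (by positivity)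
  have h2 : (1 - x ^ (2 * α)) ^ (-(1 : ℝ) / 2) ≤ D :=
    Real.rpow_le_rpow_of_nonpos (by linarith) (by linarith) (by norm_num)
  exact mul_le_mul_of_nonneg_left h2 (Real.rpow_nonneg hx0.le _)

lemma f_split (hα : 0 < α) {s t : ℝ} (hs : 0 < s) (hst : s ≤ t) (ht : t ≤ 1) :
    (∫ u in s..t, f α u) + ∫ u in t..1, f α u = ∫ u in s..1, f α u :=
  integral_add_adjacent_intervals (f_intble hα hs (hs.trans_le hst) (hst.trans ht) ht)
    (f_intble_one hα (hs.trans_le hst) ht)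

/-- The real Beta integral. -/
lemma beta_eval {u v : ℝ} (hu : 0 < u) (hv : 0 < v) :
    ∫ t in (0:ℝ)..1, t ^ (u - 1) * (1 - t) ^ (v - 1) =
      Real.Gamma u * Real.Gamma v / Real.Gamma (u + v) := by
  have h1 : Complex.Gamma u * Complex.Gamma v = Complex.Gamma (u + v) * Complex.betaIntegral u v :=
    Complex.Gamma_mul_Gamma_eq_betaIntegral (by simpa using hu) (by simpa using hv)
  have h2 : Complex.betaIntegral u v =
      ((∫ t in (0:ℝ)..1, t ^ (u - 1) * (1 - t) ^ (v - 1) : ℝ) : ℂ) := by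
    rw [Complex.betaIntegral, ← intervalIntegral.integral_ofReal]
    refine intervalIntegral.integral_congr_ae ?_
    have hne : ∀ᵐ x : ℝ, x ≠ 1 := by
      rw [MeasureTheory.ae_iff]
      simp only [ne_eq, not_not, Set.setOf_eq_eq_singleton]
      exact measure_singleton 1
    filter_upwards [hne] with x hx1 hx
    rw [uIoc_of_le (by norm_num : (0:ℝ) ≤ 1)] at hx
    have hx0 : 0 < x := hx.1
    have hxlt : x < 1 := lt_of_le_of_ne hx.2 hx1
    rw [Complex.ofReal_mul, Complex.ofReal_cpow hx0.le,
      Complex.ofReal_cpow (show (0:ℝ) ≤ 1 - x by linarith)]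
    push_cast
    ring
  rw [h2, Complex.Gamma_ofReal, Complex.Gamma_ofReal,
    show ((u : ℂ) + v) = ((u + v : ℝ) : ℂ) by push_cast; ring, Complex.Gamma_ofReal] at h1
  have h3 : Real.Gamma (u + v) ≠ 0 := (Real.Gamma_pos_of_pos (by positivity)).ne'
  have h4 : Real.Gamma u * Real.Gamma v =
      Real.Gamma (u + v) * ∫ t in (0:ℝ)..1, t ^ (u - 1) * (1 - t) ^ (v - 1) := by
    exact_mod_cast h1
  field_simp [h4, mul_comm]
  rw [h4]; ring

/-- Change of variables `t = u^(2α)`. -/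
lemma cov (hα : 0 < α) :
    ∫ t in Ioo (0:ℝ) 1, t ^ ((1 - α) / (2 * α) - 1) * (1 - t) ^ (-(1:ℝ) / 2) =
      (2 * α) * ∫ u in Ioo (0:ℝ) 1, f α u := by
  have h2α : (0:ℝ) < 2 * α := by positivity
  have himg : (fun u : ℝ => u ^ (2 * α)) '' (Ioo 0 1) = Ioo 0 1 := by
    ext t
    constructor
    · rintro ⟨w, hw, rfl⟩
      exact ⟨Real.rpow_pos_of_pos hw.1 _, Real.rpow_lt_one hw.1.le hw.2 h2α⟩
    · intro ht
      refine ⟨t ^ (1 / (2 * α)),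
        ⟨Real.rpow_pos_of_pos ht.1 _, Real.rpow_lt_one ht.1.le ht.2 (by positivity)⟩, ?_⟩
      show (t ^ (1 / (2 * α))) ^ (2 * α) = t
      rw [← Real.rpow_mul ht.1.le]
      rw [one_div, inv_mul_cancel₀ h2α.ne', Real.rpow_one]
  have hderiv : ∀ w ∈ Ioo (0:ℝ) 1, HasDerivWithinAt (fun u : ℝ => u ^ (2 * α))
      ((2 * α) * w ^ (2 * α - 1)) (Ioo 0 1) w := fun w hw =>
    (Real.hasDerivAt_rpow_const (Or.inl hw.1.ne')).hasDerivWithinAt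
  have hinj : InjOn (fun u : ℝ => u ^ (2 * α)) (Ioo 0 1) := by
    intro w hw z hz h
    rcases lt_trichotomy w z with hlt | heq | hlt
    · exact absurd h (Real.rpow_lt_rpow hw.1.le hlt h2α).ne
    · exact heq
    · exact absurd h.symm (Real.rpow_lt_rpow hz.1.le hlt h2α).ne
  have key := integral_image_eq_integral_abs_deriv_smul measurableSet_Ioo hderiv hinj
    (fun t => t ^ ((1 - α) / (2 * α) - 1) * (1 - t) ^ (-(1:ℝ) / 2))
  rw [himg] at key
  rw [key, show (2 * α) * ∫ u in Ioo (0:ℝ) 1, f α u = ∫ u in Ioo (0:ℝ) 1, (2 * α) * f α u from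
    (MeasureTheory.integral_const_mul _ _).symm]
  refine setIntegral_congr_fun measurableSet_Ioo ?_
  intro w hw
  have hw0 : 0 < w := hw.1
  have habs : |(2 * α) * w ^ (2 * α - 1)| = (2 * α) * w ^ (2 * α - 1) :=
    abs_of_pos (mul_pos h2α (Real.rpow_pos_of_pos hw0 _))
  simp only [smul_eq_mul, habs]
  rw [← Real.rpow_mul hw0.le]
  have hexp : 2 * α * ((1 - α) / (2 * α) - 1) = 1 - 3 * α := by field_simp; ring
  rw [hexp]
  simp only [f]
  rw [show (2 * α) * w ^ (2 * α - 1) * (w ^ (1 - 3 * α) * (1 - w ^ (2 * α)) ^ (-(1:ℝ) / 2)) =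
    (2 * α) * ((w ^ (2 * α - 1) * w ^ (1 - 3 * α)) * (1 - w ^ (2 * α)) ^ (-(1:ℝ) / 2)) from by ring,
    ← Real.rpow_add hw0]
  rw [show 2 * α - 1 + (1 - 3 * α) = -α by ring]

lemma L_val (hα : 0 < α) (hα1 : α < 1) :
    (2 * α) * ∫ u in (0:ℝ)..1, f α u =
      Real.Gamma ((1 - α) / (2 * α)) * Real.sqrt π / Real.Gamma (1 / (2 * α)) := by
  have hbpos : (0:ℝ) < (1 - α) / (2 * α) := div_pos (by linarith) (by positivity)
  have e1 : ∫ u in (0:ℝ)..1, f α u = ∫ u in Ioo (0:ℝ) 1, f α u := by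
    rw [intervalIntegral.integral_of_le zero_le_one, MeasureTheory.integral_Ioc_eq_integral_Ioo]
  have e2 : ∫ t in (0:ℝ)..1, t ^ ((1 - α) / (2 * α) - 1) * (1 - t) ^ ((1:ℝ)/2 - 1)
      = ∫ t in Ioo (0:ℝ) 1, t ^ ((1 - α) / (2 * α) - 1) * (1 - t) ^ (-(1:ℝ)/2) := by
    rw [show (1:ℝ)/2 - 1 = -(1:ℝ)/2 by norm_num]
    rw [intervalIntegral.integral_of_le zero_le_one, MeasureTheory.integral_Ioc_eq_integral_Ioo]
  have hbeta := beta_eval hbpos (by norm_num : (0:ℝ) < 1/2)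
  rw [e2, cov hα] at hbeta
  rw [e1, hbeta, Real.Gamma_one_half_eq,
    show (1 - α) / (2 * α) + 1/2 = 1/(2*α) by field_simp; ring]

end IAlphaAux

/-- For `α > 0`, `α ≠ 1`, the function
`I_α(s) = ∫_s^1 u^{-α} (1 - u^{2α})^{-1/2} du` is continuous and strictly decreasing on
`(0,1)`; if `0 < α < 1` it maps `(0,1)` bijectively onto `(0, C_α/(1-α))` with
`C_α = √π Γ((1+α)/(2α)) / Γ(1/(2α))`, and if `α > 1` it maps `(0,1)` bijectively
onto `(0, ∞)`. -/
theorem I_alpha_properties (α : ℝ) (hα : 0 < α) (hα1 : α ≠ 1) :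
    ContinuousOn (fun s : ℝ =>
        ∫ u in s..(1 : ℝ), u ^ (-α) * (1 - u ^ (2 * α)) ^ (-(1 : ℝ) / 2))
      (Set.Ioo 0 1) ∧
    StrictAntiOn (fun s : ℝ =>
        ∫ u in s..(1 : ℝ), u ^ (-α) * (1 - u ^ (2 * α)) ^ (-(1 : ℝ) / 2))
      (Set.Ioo 0 1) ∧
    (α < 1 →
      Set.BijOn (fun s : ℝ =>
          ∫ u in s..(1 : ℝ), u ^ (-α) * (1 - u ^ (2 * α)) ^ (-(1 : ℝ) / 2))
        (Set.Ioo 0 1)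
        (Set.Ioo 0
          ((Real.sqrt π * Real.Gamma ((1 + α) / (2 * α)) / Real.Gamma (1 / (2 * α)))
            / (1 - α)))) ∧
    (1 < α →
      Set.BijOn (fun s : ℝ =>
          ∫ u in s..(1 : ℝ), u ^ (-α) * (1 - u ^ (2 * α)) ^ (-(1 : ℝ) / 2))
        (Set.Ioo 0 1) (Set.Ioi 0)) := by
  have hfeq : (fun u : ℝ => u ^ (-α) * (1 - u ^ (2 * α)) ^ (-(1 : ℝ) / 2)) = IAlphaAux.f α := rfl
  simp only [hfeq]
  set F : ℝ → ℝ := fun s => ∫ u in s..(1:ℝ), IAlphaAux.f α u with hFdef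
  -- continuity
  have hcont : ContinuousOn F (Ioo 0 1) := by
    intro s₀ hs₀
    have ha0 : 0 < s₀ / 2 := by linarith [hs₀.1]
    have ha1 : s₀ / 2 < s₀ := by linarith [hs₀.1]
    have hco : s₀ / 2 ≤ 1 := by linarith [hs₀.2]
    have hintp : IntervalIntegrable (IAlphaAux.f α) volume (s₀/2) 1 :=
      IAlphaAux.f_intble_one hα ha0 hco
    have hG : ContinuousOn (fun s => ∫ u in (s₀/2)..s, IAlphaAux.f α u) (Icc (s₀/2) 1) := by
      have := intervalIntegral.continuousOn_primitive_interval' hintp left_mem_uIcc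
      rwa [uIcc_of_le hco] at this
    have hGat : ContinuousAt (fun s => ∫ u in (s₀/2)..s, IAlphaAux.f α u) s₀ :=
      (hG s₀ ⟨ha1.le, hs₀.2.le⟩).continuousAt (Icc_mem_nhds ha1 hs₀.2)
    have heq : F =ᶠ[𝓝 s₀] fun s =>
        (∫ u in (s₀/2)..1, IAlphaAux.f α u) - ∫ u in (s₀/2)..s, IAlphaAux.f α u := by
      filter_upwards [isOpen_Ioo.mem_nhds (⟨ha1, hs₀.2⟩ : s₀ ∈ Ioo (s₀/2) 1)] with s hs
      have hsp := IAlphaAux.f_split hα ha0 hs.1.le hs.2.le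
      show (∫ u in s..(1:ℝ), IAlphaAux.f α u) = _
      linarith
    exact (ContinuousAt.congr (continuousAt_const.sub hGat) heq.symm).continuousWithinAt
  -- strict antitonicity
  have hanti : StrictAntiOn F (Ioo 0 1) := by
    intro s hs t ht hst
    have hsplit := IAlphaAux.f_split hα hs.1 hst.le ht.2.le
    have hpos : 0 < ∫ u in s..t, IAlphaAux.f α u :=
      intervalIntegral_pos_of_pos_on
        (IAlphaAux.f_intble hα hs.1 (hs.1.trans hst) hs.2.le ht.2.le)
        (fun x hx => IAlphaAux.f_pos hα ⟨hs.1.trans hx.1, hx.2.trans ht.2⟩) hst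
    show F t < F s
    have h1 : (∫ u in s..t, IAlphaAux.f α u) + F t = F s := hsplit
    linarith
  -- positivity of F
  have hFpos : ∀ s ∈ Ioo (0:ℝ) 1, 0 < F s := fun s hs =>
    intervalIntegral_pos_of_pos_on (IAlphaAux.f_intble_one hα hs.1 hs.2.le)
      (fun x hx => IAlphaAux.f_pos hα ⟨hs.1.trans hx.1, hx.2⟩) hs.2
  -- limit 0 at 1
  have htend1 : Tendsto F (𝓝[<] (1:ℝ)) (𝓝 0) := by
    have h05 : IntervalIntegrable (IAlphaAux.f α) volume (1/2) 1 :=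
      IAlphaAux.f_intble_one hα (by norm_num) (by norm_num)
    have hG : ContinuousOn (fun s => ∫ u in (1/2:ℝ)..s, IAlphaAux.f α u) (Icc (1/2:ℝ) 1) := by
      have := intervalIntegral.continuousOn_primitive_interval' h05 left_mem_uIcc
      rwa [uIcc_of_le (by norm_num : (1/2:ℝ) ≤ 1)] at this
    have hGat : Tendsto (fun s => ∫ u in (1/2:ℝ)..s, IAlphaAux.f α u)
        (𝓝[Icc (1/2:ℝ) 1] 1) (𝓝 (∫ u in (1/2:ℝ)..1, IAlphaAux.f α u)) :=
      hG 1 ⟨by norm_num, le_rfl⟩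
    have h2 : Tendsto (fun s => (∫ u in (1/2:ℝ)..1, IAlphaAux.f α u) -
        ∫ u in (1/2:ℝ)..s, IAlphaAux.f α u) (𝓝[Ioo (1/2:ℝ) 1] 1) (𝓝 0) := by
      have h3 := hGat.mono_left (nhdsWithin_mono _ Ioo_subset_Icc_self)
      have h4 : Tendsto (fun _ : ℝ => (∫ u in (1/2:ℝ)..1, IAlphaAux.f α u))
          (𝓝[Ioo (1/2:ℝ) 1] 1) (𝓝 (∫ u in (1/2:ℝ)..1, IAlphaAux.f α u)) := tendsto_const_nhds
      simpa using h4.sub h3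
    have h3 : Tendsto F (𝓝[Ioo (1/2:ℝ) 1] 1) (𝓝 0) := by
      refine Tendsto.congr' ?_ h2
      filter_upwards [self_mem_nhdsWithin] with s hs
      have hsp := IAlphaAux.f_split hα (by norm_num) hs.1.le hs.2.le
      show _ = (∫ u in s..(1:ℝ), IAlphaAux.f α u)
      linarith
    rwa [nhdsWithin_Ioo_eq_nhdsLT (by norm_num : (1/2:ℝ) < 1)] at h3
  -- existence of small values
  have hsmall : ∀ y : ℝ, 0 < y → ∃ s ∈ Ioo (0:ℝ) 1, F s < y := by
    intro y hy
    have hmem : Ioo (0:ℝ) 1 ∈ 𝓝[<] (1:ℝ) := by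
      rw [← nhdsWithin_Ioo_eq_nhdsLT (show (0:ℝ) < 1 by norm_num)]
      exact self_mem_nhdsWithin
    obtain ⟨s, h1, h2⟩ :=
      ((htend1.eventually_lt_const hy).and (eventually_of_mem hmem fun x hx => hx)).exists
    exact ⟨s, h2, h1⟩
  -- surjectivity helper
  have hsurj : ∀ y : ℝ, 0 < y → (∃ s ∈ Ioo (0:ℝ) 1, y < F s) →
      ∃ s ∈ Ioo (0:ℝ) 1, F s = y := by
    intro y hy hbig
    obtain ⟨s₁, hs₁, hFs₁⟩ := hsmall y hy
    obtain ⟨s₂, hs₂, hFs₂⟩ := hbig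
    have hlt21 : s₂ < s₁ := by
      by_contra hc
      push_neg at hc
      rcases eq_or_lt_of_le hc with h | h
      · rw [← h] at hFs₂; linarith
      · have := hanti hs₁ hs₂ h; linarith
    have hsub : Icc s₂ s₁ ⊆ Ioo (0:ℝ) 1 := fun x hx =>
      ⟨hs₂.1.trans_le hx.1, lt_of_le_of_lt hx.2 hs₁.2⟩
    obtain ⟨x, hx, hxy⟩ := intermediate_value_Icc' hlt21.le (hcont.mono hsub)
      (⟨hFs₁.le, hFs₂.le⟩ : y ∈ Icc (F s₁) (F s₂))
    exact ⟨x, hsub hx, hxy⟩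
  refine ⟨hcont, hanti, ?_, ?_⟩
  · -- case α < 1
    intro hlt
    have hI01 := IAlphaAux.f_intble_zero hα hlt
    have hsplit0 : ∀ s ∈ Ioo (0:ℝ) 1,
        (∫ u in (0:ℝ)..s, IAlphaAux.f α u) + F s = ∫ u in (0:ℝ)..1, IAlphaAux.f α u :=
      fun s hs => integral_add_adjacent_intervals
        (hI01.trans (IAlphaAux.f_intble_one hα hs.1 hs.2.le).symm)
        (IAlphaAux.f_intble_one hα hs.1 hs.2.le)
    set L : ℝ := ∫ u in (0:ℝ)..1, IAlphaAux.f α u with hLdef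
    have hFltL : ∀ s ∈ Ioo (0:ℝ) 1, F s < L := by
      intro s hs
      have h0s : 0 < ∫ u in (0:ℝ)..s, IAlphaAux.f α u :=
        intervalIntegral_pos_of_pos_on
          (hI01.trans (IAlphaAux.f_intble_one hα hs.1 hs.2.le).symm)
          (fun x hx => IAlphaAux.f_pos hα ⟨hx.1, hx.2.trans hs.2⟩) hs.1
      have := hsplit0 s hs
      linarith
    have htend0 : Tendsto F (𝓝[Ioo (0:ℝ) 1] 0) (𝓝 L) := by
      have hG : ContinuousOn (fun s => ∫ u in (0:ℝ)..s, IAlphaAux.f α u) (Icc (0:ℝ) 1) := by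
        have := intervalIntegral.continuousOn_primitive_interval' hI01 left_mem_uIcc
        rwa [uIcc_of_le zero_le_one] at this
      have hGat : Tendsto (fun s => ∫ u in (0:ℝ)..s, IAlphaAux.f α u)
          (𝓝[Icc (0:ℝ) 1] 0) (𝓝 (∫ u in (0:ℝ)..(0:ℝ), IAlphaAux.f α u)) :=
        hG 0 ⟨le_rfl, zero_le_one⟩
      rw [intervalIntegral.integral_same] at hGat
      have h3 := hGat.mono_left (nhdsWithin_mono _ Ioo_subset_Icc_self)
      have h2 : Tendsto (fun s => L - ∫ u in (0:ℝ)..s, IAlphaAux.f α u)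
          (𝓝[Ioo (0:ℝ) 1] 0) (𝓝 L) := by
        have h4 : Tendsto (fun _ : ℝ => L) (𝓝[Ioo (0:ℝ) 1] 0) (𝓝 L) := tendsto_const_nhds
        simpa using h4.sub h3
      refine Tendsto.congr' ?_ h2
      filter_upwards [self_mem_nhdsWithin] with s hs
      have := hsplit0 s hs
      show _ = (∫ u in s..(1:ℝ), IAlphaAux.f α u)
      linarith
    have hbig_lt : ∀ y, y < L → ∃ s ∈ Ioo (0:ℝ) 1, y < F s := by
      intro y hy
      have : NeBot (𝓝[Ioo (0:ℝ) 1] (0:ℝ)) := by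
        rw [nhdsWithin_Ioo_eq_nhdsGT (show (0:ℝ) < 1 by norm_num)]
        infer_instance
      obtain ⟨s, h1, h2⟩ :=
        ((htend0.eventually_const_lt hy).and
          (eventually_of_mem self_mem_nhdsWithin fun x hx => hx)).exists
      exact ⟨s, h2, h1⟩
    -- identify L
    have hLeq : (Real.sqrt π * Real.Gamma ((1 + α) / (2 * α)) / Real.Gamma (1 / (2 * α)))
        / (1 - α) = L := by
      have h := IAlphaAux.L_val hα hlt
      have hbpos : (0:ℝ) < (1 - α) / (2 * α) := div_pos (by linarith) (by positivity)
      have hγ : Real.Gamma ((1 + α) / (2 * α)) =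
          ((1 - α) / (2 * α)) * Real.Gamma ((1 - α) / (2 * α)) := by
        rw [show (1 + α) / (2 * α) = (1 - α) / (2 * α) + 1 by field_simp; ring,
          Real.Gamma_add_one hbpos.ne']
      have hΓne : Real.Gamma (1 / (2 * α)) ≠ 0 :=
        (Real.Gamma_pos_of_pos (by positivity)).ne'
      have h1α : (1 : ℝ) - α ≠ 0 := ne_of_gt (by linarith)
      have hα' : (2 * α) ≠ 0 := by positivity
      rw [hγ]
      field_simp at h ⊢
      linear_combination -h
    rw [hLeq]
    refine ⟨fun s hs => ⟨hFpos s hs, hFltL s hs⟩, hanti.injOn, ?_⟩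
    intro y hy
    obtain ⟨s, hs, hFs⟩ := hsurj y hy.1 (hbig_lt y hy.2)
    exact ⟨s, hs, hFs⟩
  · -- case 1 < α
    intro hgt
    have hbig_gt : ∀ y : ℝ, ∃ s ∈ Ioo (0:ℝ) 1, y < F s := by
      intro y
      have htends : Tendsto (fun s : ℝ => s ^ (1 - α)) (𝓝[>] (0:ℝ)) atTop := by
        have h1 : Tendsto (fun x : ℝ => x ^ (α - 1)) atTop atTop :=
          tendsto_rpow_atTop (by linarith)
        have h2 := h1.comp tendsto_inv_nhdsGT_zero
        refine Tendsto.congr' ?_ h2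
        filter_upwards [self_mem_nhdsWithin] with s hs
        have hs0 : (0:ℝ) < s := hs
        show (s⁻¹) ^ (α - 1) = s ^ (1 - α)
        rw [Real.inv_rpow hs0.le, ← Real.rpow_neg hs0.le, show -(α - 1) = 1 - α by ring]
      have hev1 := htends.eventually_gt_atTop ((α - 1) * y + (1/2:ℝ) ^ (1 - α))
      have hev2 : Ioo (0:ℝ) (1/2) ∈ 𝓝[>] (0:ℝ) :=
        Ioo_mem_nhdsGT_of_mem ⟨le_rfl, by norm_num⟩
      obtain ⟨s, hbound, hs⟩ := (hev1.and (eventually_of_mem hev2 fun x hx => hx)).exists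
      have hs1 : s < 1 := hs.2.trans (by norm_num)
      refine ⟨s, ⟨hs.1, hs1⟩, ?_⟩
      have hsplit := IAlphaAux.f_split hα hs.1 hs.2.le (by norm_num)
      have hF12 : 0 ≤ ∫ u in (1/2:ℝ)..1, IAlphaAux.f α u :=
        intervalIntegral.integral_nonneg (by norm_num)
          (fun u hu => IAlphaAux.f_nonneg hα (le_trans (by norm_num) hu.1) hu.2)
      have hcomp : (∫ u in s..(1/2:ℝ), u ^ (-α)) ≤ ∫ u in s..(1/2:ℝ), IAlphaAux.f α u := by
        refine intervalIntegral.integral_mono_on hs.2.le ?_ ?_ ?_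
        · refine intervalIntegrable_rpow (Or.inr ?_)
          rw [uIcc_of_le hs.2.le]
          intro hmem
          exact absurd hmem.1 (by linarith [hs.1])
        · exact IAlphaAux.f_intble hα hs.1 (by norm_num) hs1.le (by norm_num)
        · intro u hu
          have hu0 : 0 < u := lt_of_lt_of_le hs.1 hu.1
          have hu1 : u < 1 := lt_of_le_of_lt hu.2 (by norm_num)
          have hfac : 1 ≤ (1 - u ^ (2 * α)) ^ (-(1:ℝ)/2) := by
            have hlt1 : u ^ (2 * α) < 1 := Real.rpow_lt_one hu0.le hu1 (by positivity)
            have hge0 : (0:ℝ) ≤ u ^ (2 * α) := Real.rpow_nonneg hu0.le _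
            exact Real.one_le_rpow_of_pos_of_le_one_of_nonpos
              (by linarith) (by linarith) (by norm_num)
          calc u ^ (-α) = u ^ (-α) * 1 := (mul_one _).symm
            _ ≤ u ^ (-α) * (1 - u ^ (2 * α)) ^ (-(1:ℝ)/2) :=
              mul_le_mul_of_nonneg_left hfac (Real.rpow_nonneg hu0.le _)
      have hval : (∫ u in s..(1/2:ℝ), u ^ (-α)) =
          ((1/2:ℝ) ^ (1 - α) - s ^ (1 - α)) / (1 - α) := by
        rw [integral_rpow (Or.inr ⟨by intro hc; exact hα1 (by linarith [neg_eq_iff_eq_neg.mp hc]),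
          by rw [uIcc_of_le hs.2.le]; intro hmem; exact absurd hmem.1 (by linarith [hs.1])⟩)]
        rw [show -α + 1 = 1 - α by ring]
      have hgt' : y < ((1/2:ℝ) ^ (1 - α) - s ^ (1 - α)) / (1 - α) := by
        rw [lt_div_iff_of_neg (by linarith : (1:ℝ) - α < 0)]
        nlinarith [hbound]
      rw [← hval] at hgt'
      show y < ∫ u in s..(1:ℝ), IAlphaAux.f α u
      linarith [hsplit, hcomp, hF12]
    refine ⟨fun s hs => hFpos s hs, hanti.injOn, ?_⟩
    intro y hy
    obtain ⟨s, hs, hFs⟩ := hsurj y hy (hbig_gt y)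
    exact ⟨s, hs, hFs⟩
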